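/- arXiv:2101.00015 — 4 statements merged into one kernel-verified Lean document; each statement's English description precedes it below -/
import Mathlib

section
/- Let H be an n×n complex matrix that is diagonalizable with real spectrum: there exist an invertible n×n complex matrix W and a diagonal matrix D with real diagonal entries such that H = W D W⁻¹. Then there exists an n×n Hermitian positive-definite matrix η satisfying the quasi-Hermiticity condition Hᴴ = η H η⁻¹ (one may take η = (W Wᴴ)⁻¹). In particular, every finite-dimensional Hamiltonian with unbroken PT symmetry admits a metric operator with respect to which it is Hermitian. -/
open Matrix
open scoped ComplexOrder

lemma posDef_mul_conjTranspose_self_of_isUnit {n : ℕ} {W : Matrix (Fin n) (Fin n) ℂ}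
    (hW : IsUnit W) : (W * Wᴴ).PosDef := by
  refine Matrix.posDef_iff_dotProduct_mulVec.2 ⟨(Matrix.isHermitian_mul_conjTranspose_self W), fun x hx => ?_⟩
  have h : star x ⬝ᵥ (W * Wᴴ) *ᵥ x = star (Wᴴ *ᵥ x) ⬝ᵥ (Wᴴ *ᵥ x) := by
    rw [← mulVec_mulVec, dotProduct_mulVec, star_mulVec, conjTranspose_conjTranspose]
  rw [h, Matrix.dotProduct_star_self_pos_iff]
  intro hzero
  exact hx (Matrix.mulVec_injective_iff_isUnit.2 (((Matrix.isUnit_conjTranspose W).2 hW))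
    (by simpa [Matrix.mulVec_zero] using hzero))

/-- Every matrix that is diagonalizable with real spectrum (a Hamiltonian with
unbroken PT symmetry), `H = W D W⁻¹` with `W` invertible and `D` a real diagonal matrix,
admits a Hermitian positive-definite metric operator `η` satisfying the quasi-Hermiticity
condition `Hᴴ = η * H * η⁻¹`. -/
theorem diagonalizable_real_spectrum_admits_metric
    {n : ℕ} (H W : Matrix (Fin n) (Fin n) ℂ) (d : Fin n → ℝ)
    (hW : IsUnit W)
    (hH : H = W * Matrix.diagonal (fun i => (d i : ℂ)) * W⁻¹) :
    ∃ η : Matrix (Fin n) (Fin n) ℂ, η.PosDef ∧ Hᴴ = η * H * η⁻¹ := by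
  have hP : (W * Wᴴ).PosDef := posDef_mul_conjTranspose_self_of_isUnit hW
  refine ⟨(W * Wᴴ)⁻¹, hP.inv, ?_⟩
  have hPu : IsUnit (W * Wᴴ) := hP.isUnit
  have hWH : IsUnit Wᴴ := ((Matrix.isUnit_conjTranspose W).2 hW)
  have hDH : (Matrix.diagonal (fun i => (d i : ℂ)))ᴴ = Matrix.diagonal (fun i => (d i : ℂ)) := by
    ext i j
    rcases eq_or_ne i j with h | h
    · subst h; simp [Complex.conj_ofReal]
    · simp [Matrix.conjTranspose_apply, Matrix.diagonal_apply_ne _ h,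
        Matrix.diagonal_apply_ne' _ h]
  rw [Matrix.nonsing_inv_nonsing_inv _ (hPu.map Matrix.detMonoidHom), hH]
  rw [Matrix.conjTranspose_mul, Matrix.conjTranspose_mul, hDH,
    Matrix.conjTranspose_nonsing_inv, Matrix.mul_inv_rev]
  have hWinv : W⁻¹ * W = 1 := Matrix.nonsing_inv_mul W (hW.map Matrix.detMonoidHom)
  have hWHinv : Wᴴ⁻¹ * Wᴴ = 1 := Matrix.nonsing_inv_mul Wᴴ (hWH.map Matrix.detMonoidHom)
  have key : (Wᴴ⁻¹ * W⁻¹) * (W * Matrix.diagonal (fun i => (d i : ℂ)) * W⁻¹) * (W * Wᴴ)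
      = Wᴴ⁻¹ * ((W⁻¹ * W) * (Matrix.diagonal (fun i => (d i : ℂ)) * ((W⁻¹ * W) * Wᴴ))) := by
    simp only [Matrix.mul_assoc]
  rw [key, hWinv]
  simp [Matrix.mul_assoc]
end

section
/- Let η be a 2×2 complex Hermitian matrix whose eigenvalues λ₁, λ₂ satisfy 1 ≥ λ₁ > λ₂ > 0, and let p ∈ [0, 1). Consider the 3×3 Hermitian matrix D := (η ⊕ 1) − (1−p)·I₃, where η ⊕ 1 is the block-diagonal matrix with top-left block η and bottom-right entry 1. Then the sum of the absolute values of the eigenvalues of D (i.e. the trace norm of D) is at least λ₁ − λ₂. Consequently, the verification threshold D_th = (λ₁ − λ₂)/3 separates the honest inner-product-changing channel from any channel of the form ρ ↦ Σⱼ pⱼ (Uⱼ⊕1)ᴴ ρ (Uⱼ⊕1) implemented by a dishonest prover using qubit unitaries and random discarding. -/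
open Matrix
open scoped ComplexOrder

/-- If a Hermitian complex matrix has a real eigenvalue witnessed by a nonzero vector,
then that value is among `hA.eigenvalues`. -/
lemma exists_eigenvalue_eq_of_mulVec {n : Type*} [Fintype n] [DecidableEq n]
    {A : Matrix n n ℂ} (hA : A.IsHermitian) (r : ℝ) (x : n → ℂ) (hx : x ≠ 0)
    (h : A *ᵥ x = (r : ℂ) • x) : ∃ i, hA.eigenvalues i = r := by
  have hev : Module.End.HasEigenvalue (Matrix.toLin' A) (r : ℂ) := by
    apply Module.End.hasEigenvalue_of_hasEigenvector (x := x)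
    refine ⟨Module.End.mem_eigenspace_iff.mpr ?_, hx⟩
    simpa [Matrix.toLin'_apply] using h
  have hspec : (r : ℂ) ∈ spectrum ℂ A := by
    rw [← AlgEquiv.spectrum_eq (Matrix.toLinAlgEquiv (Pi.basisFun ℂ n))]
    exact hev.mem_spectrum
  have hr : r ∈ spectrum ℝ A := spectrum.of_algebraMap_mem ℂ hspec
  rw [hA.spectrum_real_eq_range_eigenvalues] at hr
  obtain ⟨i, hi⟩ := hr
  exact ⟨i, hi⟩

/-- Let `η` be a `2×2` Hermitian matrix with eigenvalues `1 ≥ l1 > l2 > 0` and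
`p ∈ [0,1)`. Then the trace norm (sum of absolute values of eigenvalues) of the Hermitian
matrix `D = (η ⊕ 1) − (1−p)·I₃` is at least `l1 − l2`; this justifies the verification
threshold `D_th = (l1 − l2)/3`. -/
theorem trace_norm_lower_bound_for_verification
    (η : Matrix (Fin 2) (Fin 2) ℂ) (hη : η.IsHermitian) (l1 l2 p : ℝ)
    (hev : hη.eigenvalues 0 = l1 ∧ hη.eigenvalues 1 = l2)
    (h1 : l1 ≤ 1) (h12 : l2 < l1) (h2 : 0 < l2)
    (hp0 : 0 ≤ p) (hp1 : p < 1) :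
    ∀ hD : ((fromBlocks η 0 0 1 : Matrix (Fin 2 ⊕ Fin 1) (Fin 2 ⊕ Fin 1) ℂ) -
        (((1 - p : ℝ)) : ℂ) • 1).IsHermitian,
      l1 - l2 ≤ ∑ i, |hD.eigenvalues i| := by
  intro hD
  set c : ℝ := 1 - p with hc
  set D : Matrix (Fin 2 ⊕ Fin 1) (Fin 2 ⊕ Fin 1) ℂ :=
    (fromBlocks η 0 0 1 : Matrix (Fin 2 ⊕ Fin 1) (Fin 2 ⊕ Fin 1) ℂ) - ((c : ℝ) : ℂ) • 1 with hDdef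
  -- For each eigenvector of η, build an eigenvector of D
  have key : ∀ j : Fin 2, ∃ i, hD.eigenvalues i = hη.eigenvalues j - c := by
    intro j
    set v : Fin 2 → ℂ := ⇑(hη.eigenvectorBasis j) with hv
    have hbz : hη.eigenvectorBasis j ≠ 0 := by
      simpa using (hη.eigenvectorBasis).toBasis.ne_zero j
    have hvnz : v ≠ 0 := fun h0 => hbz (by ext i; exact congrFun h0 i)
    set x : (Fin 2 ⊕ Fin 1) → ℂ := Sum.elim v 0 with hx
    have hxnz : x ≠ 0 := by
      intro h0
      apply hvnz
      funext i
      have := congrFun h0 (Sum.inl i)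
      simpa [hx] using this
    have hηv : η *ᵥ v = ((hη.eigenvalues j : ℝ) : ℂ) • v := by
      have := hη.mulVec_eigenvectorBasis j
      funext i
      have h2 := congrFun this i
      simpa [RCLike.real_smul_eq_coe_smul (K := ℂ)] using h2
    apply exists_eigenvalue_eq_of_mulVec hD (hη.eigenvalues j - c) x hxnz
    have hblock : (fromBlocks η 0 0 1 : Matrix (Fin 2 ⊕ Fin 1) (Fin 2 ⊕ Fin 1) ℂ) *ᵥ x
        = ((hη.eigenvalues j : ℝ) : ℂ) • x := by
      rw [hx, fromBlocks_mulVec]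
      funext i
      cases i with
      | inl i => simp [hηv]
      | inr i => simp
    have : D *ᵥ x = (fromBlocks η 0 0 1 : Matrix (Fin 2 ⊕ Fin 1) (Fin 2 ⊕ Fin 1) ℂ) *ᵥ x
        - ((c : ℝ) : ℂ) • x := by
      rw [hDdef, sub_mulVec, smul_mulVec, one_mulVec]
    rw [this, hblock]
    have hcast : ((hη.eigenvalues j - c : ℝ) : ℂ)
        = ((hη.eigenvalues j : ℝ) : ℂ) - ((c : ℝ) : ℂ) := by push_cast; ring
    rw [hcast, sub_smul]
  obtain ⟨i₁, hi₁⟩ := key 0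
  obtain ⟨i₂, hi₂⟩ := key 1
  rw [hev.1] at hi₁
  rw [hev.2] at hi₂
  have hne : i₁ ≠ i₂ := by
    intro h
    rw [h, hi₂] at hi₁
    linarith
  have hsub : ({i₁, i₂} : Finset (Fin 2 ⊕ Fin 1)) ⊆ Finset.univ := Finset.subset_univ _
  have hsum : |hD.eigenvalues i₁| + |hD.eigenvalues i₂|
      ≤ ∑ i, |hD.eigenvalues i| := by
    calc |hD.eigenvalues i₁| + |hD.eigenvalues i₂|
        = ∑ i ∈ ({i₁, i₂} : Finset (Fin 2 ⊕ Fin 1)), |hD.eigenvalues i| :=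
          (Finset.sum_pair hne (f := fun i => |hD.eigenvalues i|)).symm
      _ ≤ ∑ i, |hD.eigenvalues i| :=
          Finset.sum_le_sum_of_subset_of_nonneg hsub (fun i _ _ => abs_nonneg _)
  have h1' : l1 - c ≤ |hD.eigenvalues i₁| := hi₁ ▸ le_abs_self _
  have h2' : -(l2 - c) ≤ |hD.eigenvalues i₂| := hi₂ ▸ neg_le_abs _
  linarith
end

section
/- Let r, s, φ be real numbers with s > r·sin φ ≥ 0, and define the 2×2 matrices H := [[r·e^{iφ}, s], [s, r·e^{−iφ}]] and η₂ := (s + r·sin φ)⁻¹ · [[s, −i·r·sin φ], [i·r·sin φ, s]]. Then η₂ is Hermitian and positive definite, and it satisfies the quasi-Hermiticity condition for H: Hᴴ η₂ = η₂ H, equivalently Hᴴ = η₂ H η₂⁻¹. -/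
open Matrix
open scoped ComplexOrder

/-- For reals `r, s, φ` with `s > r·sin φ ≥ 0`, the Bender–Brody–Jones
PT-symmetric Hamiltonian `H = [[re^{iφ}, s], [s, re^{−iφ}]]` admits the metric operator
`η₂ = (s + r sin φ)⁻¹ [[s, −ir sin φ], [ir sin φ, s]]`, which is Hermitian positive-definite
and satisfies the quasi-Hermiticity condition `Hᴴ η₂ = η₂ H`, equivalently `Hᴴ = η₂ H η₂⁻¹`. -/
theorem bbj_metric_operator
    (r s φ : ℝ) (h1 : r * Real.sin φ < s) (h2 : 0 ≤ r * Real.sin φ) :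
    (((((s + r * Real.sin φ)⁻¹ : ℝ) : ℂ) •
        !![(s : ℂ), -(Complex.I * (r * Real.sin φ : ℝ));
           Complex.I * (r * Real.sin φ : ℝ), (s : ℂ)]).PosDef) ∧
    (!![(r : ℂ) * Complex.exp (Complex.I * φ), (s : ℂ);
        (s : ℂ), (r : ℂ) * Complex.exp (-(Complex.I * φ))]ᴴ *
      ((((s + r * Real.sin φ)⁻¹ : ℝ) : ℂ) •
        !![(s : ℂ), -(Complex.I * (r * Real.sin φ : ℝ));
           Complex.I * (r * Real.sin φ : ℝ), (s : ℂ)]) =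
     ((((s + r * Real.sin φ)⁻¹ : ℝ) : ℂ) •
        !![(s : ℂ), -(Complex.I * (r * Real.sin φ : ℝ));
           Complex.I * (r * Real.sin φ : ℝ), (s : ℂ)]) *
      !![(r : ℂ) * Complex.exp (Complex.I * φ), (s : ℂ);
         (s : ℂ), (r : ℂ) * Complex.exp (-(Complex.I * φ))]) ∧
    (!![(r : ℂ) * Complex.exp (Complex.I * φ), (s : ℂ);
        (s : ℂ), (r : ℂ) * Complex.exp (-(Complex.I * φ))]ᴴ =
     ((((s + r * Real.sin φ)⁻¹ : ℝ) : ℂ) •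
        !![(s : ℂ), -(Complex.I * (r * Real.sin φ : ℝ));
           Complex.I * (r * Real.sin φ : ℝ), (s : ℂ)]) *
      !![(r : ℂ) * Complex.exp (Complex.I * φ), (s : ℂ);
         (s : ℂ), (r : ℂ) * Complex.exp (-(Complex.I * φ))] *
      ((((s + r * Real.sin φ)⁻¹ : ℝ) : ℂ) •
        !![(s : ℂ), -(Complex.I * (r * Real.sin φ : ℝ));
           Complex.I * (r * Real.sin φ : ℝ), (s : ℂ)])⁻¹) := by
  set a : ℝ := r * Real.sin φ with ha
  have hc : (0:ℝ) < (s + a)⁻¹ := inv_pos.2 (by linarith)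
  -- Positive definiteness
  have hpd : (((((s + a)⁻¹ : ℝ) : ℂ) •
      !![(s : ℂ), -(Complex.I * (a : ℝ));
         Complex.I * (a : ℝ), (s : ℂ)]).PosDef) := by
    rw [Matrix.posDef_iff_dotProduct_mulVec]
    constructor
    · ext i j
      fin_cases i <;> fin_cases j <;>
        simp [Matrix.conjTranspose_apply, Complex.ext_iff]
    · intro x hx
      have hx' : x 0 ≠ 0 ∨ x 1 ≠ 0 := by
        by_contra h
        push_neg at h
        exact hx (funext fun i => by fin_cases i <;> simp [h.1, h.2])
      set p := (x 0).re with hp; set q := (x 0).im with hq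
      set u := (x 1).re with hu; set v := (x 1).im with hv
      have hsum : 0 < p^2 + q^2 + u^2 + v^2 := by
        rcases hx' with h | h
        · have : p ≠ 0 ∨ q ≠ 0 := by
            by_contra hpq; push_neg at hpq
            exact h (Complex.ext hpq.1 hpq.2)
          rcases this with h' | h' <;> nlinarith [sq_nonneg p, sq_nonneg q, sq_nonneg u, sq_nonneg v, sq_pos_of_ne_zero h']
        · have : u ≠ 0 ∨ v ≠ 0 := by
            by_contra hpq; push_neg at hpq
            exact h (Complex.ext hpq.1 hpq.2)
          rcases this with h' | h' <;> nlinarith [sq_nonneg p, sq_nonneg q, sq_nonneg u, sq_nonneg v, sq_pos_of_ne_zero h']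
      have key : star x ⬝ᵥ ((((s + a)⁻¹ : ℝ) : ℂ) •
          !![(s : ℂ), -(Complex.I * (a : ℝ));
             Complex.I * (a : ℝ), (s : ℂ)]) *ᵥ x =
          (((s + a)⁻¹ * (s*(p^2+q^2+u^2+v^2) + 2*a*(p*v - q*u)) : ℝ) : ℂ) := by
        have h0 : x 0 = Complex.mk p q := by rw [hp, hq]
        have h1' : x 1 = Complex.mk u v := by rw [hu, hv]
        simp only [Matrix.mulVec, dotProduct, Fin.sum_univ_two, Matrix.smul_apply,
          Matrix.cons_val', Matrix.cons_val_zero, Matrix.cons_val_one, Matrix.head_cons,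
          Matrix.head_fin_const, Matrix.empty_val', Matrix.cons_val_fin_one, Matrix.of_apply,
          Pi.star_apply, RCLike.star_def, h0, h1']
        apply Complex.ext <;>
          simp [Complex.mul_re, Complex.mul_im, Complex.ext_iff, ← Complex.ofReal_pow,
            Complex.ofReal_re, Complex.ofReal_im] <;> ring
      rw [key]
      rw [Complex.lt_def]
      refine ⟨?_, by simp only [Complex.ofReal_im, Complex.zero_im]⟩
      simp only [Complex.zero_re, Complex.ofReal_re]
      have hinner : 0 < s * (p^2 + q^2 + u^2 + v^2) + 2 * a * (p * v - q * u) := by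
        nlinarith [mul_pos (sub_pos.2 h1) hsum,
          mul_nonneg h2 (add_nonneg (sq_nonneg (p + v)) (sq_nonneg (q - u)))]
      exact mul_pos hc hinner
  -- Intertwining relation
  have hint : (!![(r : ℂ) * Complex.exp (Complex.I * φ), (s : ℂ);
        (s : ℂ), (r : ℂ) * Complex.exp (-(Complex.I * φ))]ᴴ *
      ((((s + a)⁻¹ : ℝ) : ℂ) •
        !![(s : ℂ), -(Complex.I * (a : ℝ));
           Complex.I * (a : ℝ), (s : ℂ)]) =
     ((((s + a)⁻¹ : ℝ) : ℂ) •
        !![(s : ℂ), -(Complex.I * (a : ℝ));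
           Complex.I * (a : ℝ), (s : ℂ)]) *
      !![(r : ℂ) * Complex.exp (Complex.I * φ), (s : ℂ);
         (s : ℂ), (r : ℂ) * Complex.exp (-(Complex.I * φ))]) := by
    have he : Complex.exp (Complex.I * φ) = Real.cos φ + Real.sin φ * Complex.I := by
      rw [mul_comm, Complex.exp_mul_I]; push_cast; ring
    have he' : Complex.exp (-(Complex.I * φ)) = Real.cos φ - Real.sin φ * Complex.I := by
      rw [show -(Complex.I * (φ:ℂ)) = ((-φ : ℝ) : ℂ) * Complex.I by push_cast; ring,
        Complex.exp_mul_I, ← Complex.ofReal_cos, ← Complex.ofReal_sin,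
        Real.cos_neg, Real.sin_neg]
      push_cast; ring
    ext i j
    fin_cases i <;> fin_cases j <;>
      · simp only [Matrix.mul_apply, Fin.sum_univ_two, Matrix.conjTranspose_apply,
          Matrix.smul_apply, Matrix.cons_val', Matrix.cons_val_zero, Matrix.cons_val_one,
          Matrix.head_cons, Matrix.head_fin_const, Matrix.empty_val', Matrix.cons_val_fin_one,
          he, he', _root_.map_mul, Complex.conj_ofReal, map_add, map_sub, Complex.conj_I, ha]
        push_cast
        apply Complex.ext <;>
          simp [Complex.mul_re, Complex.mul_im, Complex.add_re, Complex.add_im,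
            Complex.sub_re, Complex.sub_im] <;> ring
  refine ⟨hpd, hint, ?_⟩
  have hdet : (((((s + a)⁻¹ : ℝ) : ℂ) •
      !![(s : ℂ), -(Complex.I * (a : ℝ));
         Complex.I * (a : ℝ), (s : ℂ)])).det ≠ 0 :=
    ne_of_gt hpd.det_pos
  rw [← hint, Matrix.mul_nonsing_inv_cancel_right _ _ (isUnit_iff_ne_zero.2 hdet)]
end

section
/- Let r, s, φ be real numbers with s > r·sin φ ≥ 0, let H := [[r·e^{iφ}, s], [s, r·e^{−iφ}]], let η₂ := (s + r·sin φ)⁻¹ · [[s, −i·r·sin φ], [i·r·sin φ, s]], and let S be the positive-definite square root of η₂. Then the equivalent Hermitian Hamiltonian h := S H S⁻¹ is given explicitly by h = [[r·cos φ, √(s² − r²·sin²φ)], [√(s² − r²·sin²φ), r·cos φ]]; i.e. S·H = h·S, and h is a real symmetric (hence Hermitian) matrix. -/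
open Matrix
open scoped ComplexOrder

/-- The Bender–Brody–Jones 2×2 PT-symmetric Hamiltonian `H = [[re^{iφ}, s], [s, re^{−iφ}]]`. -/
noncomputable def bbjH (r s φ : ℝ) : Matrix (Fin 2) (Fin 2) ℂ :=
  !![(r : ℂ) * Complex.exp (Complex.I * φ), (s : ℂ);
     (s : ℂ), (r : ℂ) * Complex.exp (-(Complex.I * φ))]

/-- The metric operator `η₂ = (s + r sin φ)⁻¹ [[s, −ir sin φ], [ir sin φ, s]]` for `bbjH`. -/
noncomputable def bbjEta (r s φ : ℝ) : Matrix (Fin 2) (Fin 2) ℂ :=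
  (((s + r * Real.sin φ)⁻¹ : ℝ) : ℂ) •
    !![(s : ℂ), -(Complex.I * (r * Real.sin φ : ℝ));
       Complex.I * (r * Real.sin φ : ℝ), (s : ℂ)]

/-- The equivalent Hermitian Hamiltonian
`h = [[r cos φ, √(s² − r² sin²φ)], [√(s² − r² sin²φ), r cos φ]]`. -/
noncomputable def bbjh (r s φ : ℝ) : Matrix (Fin 2) (Fin 2) ℂ :=
  !![((r * Real.cos φ : ℝ) : ℂ), ((Real.sqrt (s ^ 2 - r ^ 2 * Real.sin φ ^ 2) : ℝ) : ℂ);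
     ((Real.sqrt (s ^ 2 - r ^ 2 * Real.sin φ ^ 2) : ℝ) : ℂ), ((r * Real.cos φ : ℝ) : ℂ)]

lemma psd_smul' {n : Type*} [Fintype n] {A : Matrix n n ℂ} (hA : A.PosSemidef)
    (c : ℝ) (hc : 0 ≤ c) : ((c : ℂ) • A).PosSemidef := by
  refine ⟨?_, fun x => ?_⟩
  · simp [Matrix.IsHermitian, Matrix.conjTranspose_smul, Complex.conj_ofReal, hA.1.eq]
  · exact (hA.smul (by exact_mod_cast hc : (0:ℂ) ≤ c)).2 x

lemma exp_I_mul (x : ℝ) :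
    Complex.exp (Complex.I * x) = (Real.cos x : ℂ) + (Real.sin x : ℂ) * Complex.I := by
  rw [mul_comm, Complex.exp_mul_I, Complex.ofReal_cos, Complex.ofReal_sin]

set_option maxHeartbeats 4000000 in
/-- For `s > r sin φ ≥ 0` and `S` the positive-definite square root of the
metric operator `η₂` of the Bender–Brody–Jones Hamiltonian `H`, the equivalent Hermitian
Hamiltonian `S H S⁻¹` equals `h = [[r cos φ, √(s²−r² sin²φ)], [√(s²−r² sin²φ), r cos φ]]`;
i.e. `S·H = h·S`, and `h` is Hermitian. -/
theorem bbj_equivalent_hermitian_hamiltonian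
    (r s φ : ℝ) (h1 : r * Real.sin φ < s) (h2 : 0 ≤ r * Real.sin φ)
    (S : Matrix (Fin 2) (Fin 2) ℂ) (hS : S.PosDef) (hS2 : S * S = bbjEta r s φ) :
    S * bbjH r s φ * S⁻¹ = bbjh r s φ ∧
    S * bbjH r s φ = bbjh r s φ * S ∧
    (bbjh r s φ).IsHermitian := by
  have hsp : (0:ℝ) < s + r * Real.sin φ := by linarith
  have hsm : (0:ℝ) < s - r * Real.sin φ := by linarith
  set q : ℝ := Real.sqrt ((s - r * Real.sin φ) / (s + r * Real.sin φ)) with hqdef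
  have hq0 : 0 ≤ q := Real.sqrt_nonneg _
  have hq2 : q ^ 2 = (s - r * Real.sin φ) / (s + r * Real.sin φ) :=
    Real.sq_sqrt (le_of_lt (div_pos hsm hsp))
  have hq2' : q ^ 2 * (s + r * Real.sin φ) = s - r * Real.sin φ := by
    rw [hq2]; field_simp
  have hq1 : q ≤ 1 := by
    have hle : q ^ 2 ≤ 1 := by
      rw [hq2]; exact (div_le_one hsp).mpr (by linarith)
    nlinarith
  clear_value q
  have hexp1 := exp_I_mul φ
  have hexp2 : Complex.exp (-(Complex.I * (φ:ℂ))) = (Real.cos φ : ℂ) - (Real.sin φ : ℂ) * Complex.I := by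
    rw [show -(Complex.I * (φ:ℂ)) = Complex.I * ((-φ : ℝ):ℂ) by push_cast; ring, exp_I_mul,
      Real.cos_neg, Real.sin_neg]
    push_cast
    ring
  have hcℂ : (q:ℂ) ^ 2 * ((s:ℂ) + (r:ℂ) * (Real.sin φ : ℂ)) =
      (s:ℂ) - (r:ℂ) * (Real.sin φ : ℂ) := by exact_mod_cast hq2'
  have hq2ℂ : (q:ℂ) ^ 2 = ((s:ℂ) - (r:ℂ) * Complex.sin (φ:ℂ)) / ((s:ℂ) + (r:ℂ) * Complex.sin (φ:ℂ)) := by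
    rw [← Complex.ofReal_sin]; exact_mod_cast hq2
  have hneℂ : ((s:ℂ) + (r:ℂ) * Complex.sin (φ:ℂ)) ≠ 0 := by
    rw [← Complex.ofReal_sin]; exact_mod_cast (ne_of_gt hsp)
  have hinv : ((s:ℂ) + (r:ℂ) * Complex.sin (φ:ℂ)) * ((s:ℂ) + (r:ℂ) * Complex.sin (φ:ℂ))⁻¹ = 1 :=
    mul_inv_cancel₀ hneℂ
  set S₀ : Matrix (Fin 2) (Fin 2) ℂ :=
    !![(((1+q)/2 : ℝ) : ℂ), -(Complex.I * (((1-q)/2 : ℝ) : ℂ));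
       Complex.I * (((1-q)/2 : ℝ) : ℂ), (((1+q)/2 : ℝ) : ℂ)] with hS₀def
  have key : (!![(1:ℂ); Complex.I] * !![(1:ℂ); Complex.I]ᴴ) =
      !![(1:ℂ), -Complex.I; Complex.I, (1:ℂ)] := by
    ext i j
    fin_cases i <;> fin_cases j <;>
      simp [Matrix.mul_apply, Fin.sum_univ_one, Matrix.conjTranspose_apply]
  have hdecomp : S₀ = (q:ℂ) • (1 : Matrix (Fin 2) (Fin 2) ℂ) +
      (((1-q)/2 : ℝ) : ℂ) • (!![(1:ℂ); Complex.I] * !![(1:ℂ); Complex.I]ᴴ) := by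
    rw [key]
    ext i j
    fin_cases i <;> fin_cases j <;>
      simp [hS₀def, Matrix.one_apply] <;> push_cast <;> ring
  have hpsd : S₀.PosSemidef := by
    rw [hdecomp]
    exact (psd_smul' Matrix.PosSemidef.one q hq0).add
      (psd_smul' (Matrix.posSemidef_self_mul_conjTranspose _) _ (by linarith))
  have hS0sq : S₀ * S₀ = bbjEta r s φ := by
    ext i j
    fin_cases i <;> fin_cases j <;>
      · simp [hS₀def, bbjEta, Matrix.mul_apply, Fin.sum_univ_two]
        push_cast
        ring_nf
        try simp only [Complex.I_sq]
        ring_nf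
        try simp only [hq2ℂ]
        try field_simp [hneℂ]
        first
        | ring1
        | linear_combination (4*(r:ℂ)*Complex.sin (φ:ℂ)*Complex.I) * hinv
        | linear_combination (-(4*Complex.I*(r:ℂ)*Complex.sin (φ:ℂ))) * hinv
        | linear_combination (2*(r:ℂ)*Complex.sin (φ:ℂ)) * hinv
        | linear_combination (-(2*(r:ℂ)*Complex.sin (φ:ℂ))) * hinv
  have hSeq : S = S₀ := by
    open scoped MatrixOrder in
    refine (CFC.sq_eq_sq_iff S S₀ hS.posSemidef.nonneg hpsd.nonneg).mp ?_
    rw [pow_two, pow_two, hS2, hS0sq]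
  have hw : (Real.sqrt (s ^ 2 - r ^ 2 * Real.sin φ ^ 2) : ℝ) = q * (s + r * Real.sin φ) := by
    have h : s ^ 2 - r ^ 2 * Real.sin φ ^ 2 = (q * (s + r * Real.sin φ)) ^ 2 := by
      rw [mul_pow, hq2]; field_simp; ring
    rw [h, Real.sqrt_sq (by positivity)]
  have hmul : S₀ * bbjH r s φ = bbjh r s φ * S₀ := by
    ext i j
    fin_cases i <;> fin_cases j <;>
      · simp [hS₀def, bbjH, bbjh, hw, Matrix.mul_apply, Fin.sum_univ_two, hexp1, hexp2]
        push_cast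
        ring_nf
        try simp only [Complex.I_sq]
        ring_nf
        try simp only [hq2ℂ]
        try field_simp [hneℂ]
        first
        | ring1
        | linear_combination (4*(r:ℂ)*Complex.sin (φ:ℂ)*Complex.I) * hinv
        | linear_combination (-(4*Complex.I*(r:ℂ)*Complex.sin (φ:ℂ))) * hinv
  have hherm : (bbjh r s φ).IsHermitian := by
    ext i j
    fin_cases i <;> fin_cases j <;>
      simp [bbjh, Matrix.conjTranspose_apply, Complex.conj_ofReal, ← Complex.cos_conj]
  have hmul' : S * bbjH r s φ = bbjh r s φ * S := by rw [hSeq]; exact hmul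
  refine ⟨?_, hmul', hherm⟩
  rw [hmul', Matrix.mul_assoc, Matrix.mul_nonsing_inv _ ((Matrix.isUnit_iff_isUnit_det S).mp hS.isUnit),
    Matrix.mul_one]
end
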